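/- arXiv:0804.2656 — 2 statements merged into one kernel-verified Lean document; each statement's English description precedes it below -/
import Mathlib

section
/- Frostman's Lemma on Cantor space: let s ≥ 0 and let A be a compact subset of 2^ω with H^s(A) > 0, where H^s is the s-dimensional Hausdorff measure with respect to the standard metric on 2^ω. Then there exist a Borel probability measure μ on 2^ω with μ(2^ω ∖ A) = 0 and a constant γ > 0 such that μ(N_σ) ≤ γ·2^{-s·|σ|} for every finite binary string σ. -/
open MeasureTheory ENNReal

noncomputable local instance : MetricSpace (ℕ → Bool) := PiNat.metricSpace

/-- The basic open cylinder `N_σ` of a finite binary string `σ` in Cantor space `2^ω`. -/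
def cyl (σ : List Bool) : Set (ℕ → Bool) :=
  {x | ∀ i : Fin σ.length, x i = σ.get i}

namespace Frost

open Set

variable {s : ℝ} {A : Set (ℕ → Bool)}

lemma mem_cyl {x : ℕ → Bool} {σ : List Bool} :
    x ∈ cyl σ ↔ ∀ i, ∀ h : i < σ.length, x i = σ[i] :=
  ⟨fun H i hi => by simpa using H ⟨i, hi⟩, fun H i => by simpa using H i i.isLt⟩

/-- digits of x up to n -/
def digits (x : ℕ → Bool) (n : ℕ) : List Bool := List.ofFn (fun i : Fin n => x i)

@[simp] lemma digits_length (x : ℕ → Bool) (n : ℕ) : (digits x n).length = n := by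
  simp [digits]

@[simp] lemma digits_getElem (x : ℕ → Bool) (n : ℕ) {i : ℕ} (h : i < (digits x n).length) :
    (digits x n)[i] = x i := by
  simp [digits] at h ⊢

lemma mem_cyl_digits (x : ℕ → Bool) (n : ℕ) : x ∈ cyl (digits x n) := by
  rw [mem_cyl]; intro i hi; simp [digits] at hi ⊢

lemma cyl_mono {σ τ : List Bool} (h : σ <+: τ) : cyl τ ⊆ cyl σ := by
  intro x hx
  rw [mem_cyl] at hx ⊢
  intro i hi
  rw [h.getElem hi]
  exact hx i (lt_of_lt_of_le hi h.length_le)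

lemma cyl_nonempty (σ : List Bool) : (cyl σ).Nonempty := by
  refine ⟨fun i => σ.getD i false, ?_⟩
  rw [mem_cyl]
  intro i hi
  simp [List.getD_eq_getElem?_getD, List.getElem?_eq_getElem hi]

lemma compat {σ τ : List Bool} (h : (cyl σ ∩ cyl τ).Nonempty) : σ <+: τ ∨ τ <+: σ := by
  obtain ⟨x, hxσ, hxτ⟩ := h
  rw [mem_cyl] at hxσ hxτ
  rcases le_total σ.length τ.length with hl | hl
  · left
    rw [List.prefix_iff_eq_take]
    apply List.ext_getElem (by simp [hl]) (fun i h1 h2 => ?_)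
    have hi : i < σ.length := h1
    simp only [List.getElem_take]
    rw [← hxσ i hi, hxτ i (lt_of_lt_of_le hi hl)]
  · right
    rw [List.prefix_iff_eq_take]
    apply List.ext_getElem (by simp [hl]) (fun i h1 h2 => ?_)
    have hi : i < τ.length := h1
    simp only [List.getElem_take]
    rw [← hxτ i hi, hxσ i (lt_of_lt_of_le hi hl)]

lemma disjoint_of_incomp {σ τ : List Bool} (h1 : ¬ σ <+: τ) (h2 : ¬ τ <+: σ) :
    cyl σ ∩ cyl τ = ∅ := by
  by_contra h
  rcases compat (nonempty_iff_ne_empty.2 h) with h' | h' <;> tauto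

lemma cyl_injective : Function.Injective cyl := by
  intro σ τ h
  have h1 : σ <+: τ ∨ τ <+: σ := compat (by rw [h, inter_self]; exact cyl_nonempty τ)
  -- lengths equal
  have key : ∀ σ' τ' : List Bool, σ' <+: τ' → cyl σ' = cyl τ' → σ' = τ' := by
    intro σ' τ' hp he
    rcases eq_or_lt_of_le hp.length_le with hl | hl
    · exact hp.eq_of_length hl
    · exfalso
      set x : ℕ → Bool := fun i => if h : i < σ'.length then σ'[i] else !(τ'.getD i false) with hx
      have hxσ : x ∈ cyl σ' := by rw [mem_cyl]; intro i hi; simp [hx, hi]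
      have hxτ : x ∈ cyl τ' := he ▸ hxσ
      rw [mem_cyl] at hxτ
      have := hxτ σ'.length hl
      rw [hx] at this
      simp only [] at this
      rw [dif_neg (lt_irrefl _), List.getD_eq_getElem?_getD, List.getElem?_eq_getElem hl] at this
      simp at this
  rcases h1 with h1 | h1
  · exact key _ _ h1 h
  · exact (key _ _ h1 h.symm).symm

lemma cyl_split (σ : List Bool) : cyl σ = cyl (σ ++ [false]) ∪ cyl (σ ++ [true]) := by
  apply Subset.antisymm
  · intro x hx
    have hm : x ∈ cyl (σ ++ [x σ.length]) := by
      rw [mem_cyl] at hx ⊢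
      intro i hi
      simp only [List.length_append, List.length_cons, List.length_nil] at hi
      rcases lt_or_ge i σ.length with h' | h'
      · rw [List.getElem_append_left h']; exact hx i h'
      · have : i = σ.length := by omega
        subst this
        simp
    cases hb : x σ.length
    · left; rwa [hb] at hm
    · right; rwa [hb] at hm
  · rintro x (hx | hx)
    · exact cyl_mono (by simp) hx
    · exact cyl_mono (by simp) hx

lemma disjoint_children (σ : List Bool) : cyl (σ ++ [false]) ∩ cyl (σ ++ [true]) = ∅ := by
  apply eq_empty_iff_forall_notMem.2
  rintro x ⟨h0, h1⟩
  rw [mem_cyl] at h0 h1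
  have e0 := h0 σ.length (by simp)
  have e1 := h1 σ.length (by simp)
  simp at e0 e1
  rw [e0] at e1
  exact Bool.false_ne_true e1

lemma step_prefix {σ τ : List Bool} (h : σ <+: τ) (hl : σ.length < τ.length) :
    σ ++ [τ[σ.length]] <+: τ := by
  obtain ⟨t, rfl⟩ := h
  have ht : t ≠ [] := by rintro rfl; simp at hl
  obtain ⟨a, t', rfl⟩ := List.exists_cons_of_ne_nil ht
  have : (σ ++ a :: t')[σ.length] = a := by
    rw [List.getElem_append_right le_rfl]; simp
  rw [this]
  exact ⟨t', by simp⟩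


/-- capacity -/
noncomputable def cap (s : ℝ) (σ : List Bool) : ℝ≥0∞ := 2 ^ (-s * (σ.length : ℝ))

lemma cap_le_one {s : ℝ} (hs : 0 ≤ s) (σ : List Bool) : cap s σ ≤ 1 := by
  have : ((2:ℝ≥0∞)) ^ (-s * (σ.length : ℝ)) ≤ 2 ^ (0:ℝ) := by
    apply ENNReal.rpow_le_rpow_of_exponent_le (by norm_num)
    have : 0 ≤ s * (σ.length : ℝ) := mul_nonneg hs (by positivity)
    linarith
  simpa [cap] using this

lemma cap_ne_top {s : ℝ} (hs : 0 ≤ s) (σ : List Bool) : cap s σ ≠ ⊤ :=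
  ne_top_of_le_ne_top one_ne_top (cap_le_one hs σ)

/-- a cut below σ -/
def IsCut (A : Set (ℕ → Bool)) (σ : List Bool) (F : Finset (List Bool)) : Prop :=
  (∀ τ ∈ F, σ <+: τ) ∧ A ∩ cyl σ ⊆ ⋃ τ ∈ F, cyl τ

/-- min cut value -/
noncomputable def b (s : ℝ) (A : Set (ℕ → Bool)) (σ : List Bool) : ℝ≥0∞ :=
  ⨅ (F : Finset (List Bool)) (_ : IsCut A σ F), ∑ τ ∈ F, cap s τ

lemma b_le_cap (s : ℝ) (A : Set (ℕ → Bool)) (σ : List Bool) : b s A σ ≤ cap s σ := by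
  have h : IsCut A σ {σ} := ⟨by simp, by simp [Set.inter_subset_right]⟩
  have := iInf₂_le (f := fun (F : Finset (List Bool)) (_ : IsCut A σ F) => ∑ τ ∈ F, cap s τ) {σ} h
  simpa [b] using this

lemma b_le_one {s : ℝ} (hs : 0 ≤ s) (A : Set (ℕ → Bool)) (σ : List Bool) : b s A σ ≤ 1 :=
  (b_le_cap s A σ).trans (cap_le_one hs σ)

lemma b_ne_top {s : ℝ} (hs : 0 ≤ s) (A : Set (ℕ → Bool)) (σ : List Bool) : b s A σ ≠ ⊤ :=
  ne_top_of_le_ne_top one_ne_top (b_le_one hs A σ)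

lemma b_zero_of_disj {s : ℝ} {A : Set (ℕ → Bool)} {σ : List Bool}
    (h : A ∩ cyl σ = ∅) : b s A σ = 0 := by
  have hc : IsCut A σ ∅ := ⟨by simp, by simp [h]⟩
  have := iInf₂_le (f := fun (F : Finset (List Bool)) (_ : IsCut A σ F) => ∑ τ ∈ F, cap s τ) ∅ hc
  simpa [b] using this

lemma b_subadd {s : ℝ} (hs : 0 ≤ s) (A : Set (ℕ → Bool)) (σ : List Bool) :
    b s A σ ≤ b s A (σ ++ [false]) + b s A (σ ++ [true]) := by
  refine ENNReal.le_of_forall_pos_le_add fun ε hε hlt => ?_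
  have hε' : (ε : ℝ≥0∞) ≠ 0 := by exact_mod_cast hε.ne'
  have h0 : b s A (σ ++ [false]) < b s A (σ ++ [false]) + ε / 2 :=
    ENNReal.lt_add_right (b_ne_top hs A _) (ENNReal.half_pos hε').ne'
  have h1 : b s A (σ ++ [true]) < b s A (σ ++ [true]) + ε / 2 :=
    ENNReal.lt_add_right (b_ne_top hs A _) (ENNReal.half_pos hε').ne'
  rw [b, iInf_lt_iff] at h0 h1
  obtain ⟨F0, hF0⟩ := h0
  obtain ⟨F1, hF1⟩ := h1
  rw [iInf_lt_iff] at hF0 hF1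
  obtain ⟨hc0, hs0⟩ := hF0
  obtain ⟨hc1, hs1⟩ := hF1
  have hcut : IsCut A σ (F0 ∪ F1) := by
    constructor
    · intro τ hτ
      rcases Finset.mem_union.1 hτ with h | h
      · exact ((σ.prefix_append [false]).trans (hc0.1 τ h))
      · exact ((σ.prefix_append [true]).trans (hc1.1 τ h))
    · intro x hx
      have hx' : x ∈ cyl σ := hx.2
      rw [cyl_split σ] at hx'
      rcases hx' with h | h
      · have := hc0.2 ⟨hx.1, h⟩
        simp only [Set.mem_iUnion] at this ⊢
        obtain ⟨τ, hτ, hxτ⟩ := this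
        exact ⟨τ, Finset.mem_union_left _ hτ, hxτ⟩
      · have := hc1.2 ⟨hx.1, h⟩
        simp only [Set.mem_iUnion] at this ⊢
        obtain ⟨τ, hτ, hxτ⟩ := this
        exact ⟨τ, Finset.mem_union_right _ hτ, hxτ⟩
  calc b s A σ ≤ ∑ τ ∈ F0 ∪ F1, cap s τ := iInf₂_le _ hcut
    _ ≤ ∑ τ ∈ F0, cap s τ + ∑ τ ∈ F1, cap s τ := by
        calc ∑ τ ∈ F0 ∪ F1, cap s τ ≤ ∑ τ ∈ F0 ∪ F1, cap s τ + ∑ τ ∈ F0 ∩ F1, cap s τ :=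
            le_self_add
          _ = _ := Finset.sum_union_inter
    _ ≤ (b s A (σ ++ [false]) + ε/2) + (b s A (σ ++ [true]) + ε/2) := add_le_add hs0.le hs1.le
    _ = b s A (σ ++ [false]) + b s A (σ ++ [true]) + ε := by
        rw [add_add_add_comm, ENNReal.add_halves]

/-- the flow, on reversed strings -/
noncomputable def maux (s : ℝ) (A : Set (ℕ → Bool)) : List Bool → ℝ≥0∞
  | [] => b s A []
  | (i :: ρ) =>
      if i then maux s A ρ - min (b s A (ρ.reverse ++ [false])) (maux s A ρ)
      else min (b s A (ρ.reverse ++ [false])) (maux s A ρ)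

/-- the flow -/
noncomputable def mm (s : ℝ) (A : Set (ℕ → Bool)) (σ : List Bool) : ℝ≥0∞ :=
  maux s A σ.reverse

@[simp] lemma mm_nil (s : ℝ) (A : Set (ℕ → Bool)) : mm s A [] = b s A [] := rfl

lemma mm_false (s : ℝ) (A : Set (ℕ → Bool)) (σ : List Bool) :
    mm s A (σ ++ [false]) = min (b s A (σ ++ [false])) (mm s A σ) := by
  simp [mm, maux, List.reverse_append]

lemma mm_true (s : ℝ) (A : Set (ℕ → Bool)) (σ : List Bool) :
    mm s A (σ ++ [true]) = mm s A σ - min (b s A (σ ++ [false])) (mm s A σ) := by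
  simp [mm, maux, List.reverse_append]

lemma mm_add (s : ℝ) (A : Set (ℕ → Bool)) (σ : List Bool) :
    mm s A σ = mm s A (σ ++ [false]) + mm s A (σ ++ [true]) := by
  rw [mm_false, mm_true, add_tsub_cancel_of_le (min_le_right _ _)]

lemma mm_le_self (s : ℝ) (A : Set (ℕ → Bool)) (σ : List Bool) (i : Bool) :
    mm s A (σ ++ [i]) ≤ mm s A σ := by
  cases i
  · rw [mm_false]; exact min_le_right _ _
  · rw [mm_true]; exact tsub_le_self

lemma mm_mono {σ τ : List Bool} (h : σ <+: τ) (s : ℝ) (A : Set (ℕ → Bool)) :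
    mm s A τ ≤ mm s A σ := by
  obtain ⟨t, rfl⟩ := h
  induction t using List.reverseRecOn with
  | nil => simp
  | append_singleton t i ih =>
      calc mm s A (σ ++ (t ++ [i])) = mm s A ((σ ++ t) ++ [i]) := by rw [List.append_assoc]
        _ ≤ mm s A (σ ++ t) := mm_le_self _ _ _ _
        _ ≤ mm s A σ := ih

lemma mm_le_b {s : ℝ} (hs : 0 ≤ s) (A : Set (ℕ → Bool)) (σ : List Bool) :
    mm s A σ ≤ b s A σ := by
  induction σ using List.reverseRecOn with
  | nil => simp
  | append_singleton σ i ih =>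
      cases i
      · rw [mm_false]; exact min_le_left _ _
      · rw [mm_true]
        rcases le_total (b s A (σ ++ [false])) (mm s A σ) with h | h
        · rw [min_eq_left h]
          calc mm s A σ - b s A (σ ++ [false]) ≤ b s A σ - b s A (σ ++ [false]) :=
              tsub_le_tsub_right ih _
            _ ≤ (b s A (σ ++ [false]) + b s A (σ ++ [true])) - b s A (σ ++ [false]) :=
              tsub_le_tsub_right (b_subadd hs A σ) _
            _ = b s A (σ ++ [true]) := by
              rw [ENNReal.add_sub_cancel_left (b_ne_top hs A _)]
        · rw [min_eq_right h, tsub_self]; exact zero_le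

lemma mm_le_cap {s : ℝ} (hs : 0 ≤ s) (A : Set (ℕ → Bool)) (σ : List Bool) :
    mm s A σ ≤ cap s σ := (mm_le_b hs A σ).trans (b_le_cap s A σ)

lemma mm_ne_top {s : ℝ} (hs : 0 ≤ s) (A : Set (ℕ → Bool)) (σ : List Bool) : mm s A σ ≠ ⊤ :=
  ne_top_of_le_ne_top (cap_ne_top hs σ) (mm_le_cap hs A σ)


lemma append_singleton_ne {ρ ρ' : List Bool} {i j : Bool} (hij : i ≠ j) :
    ρ ++ [i] ≠ ρ' ++ [j] := by
  intro h
  have := congrArg List.getLast? h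
  simp [List.getLast?_concat] at this
  exact hij this

/-- extensions of σ by exactly k more symbols -/
def E (σ : List Bool) : ℕ → Finset (List Bool)
  | 0 => {σ}
  | (k+1) => (E σ k).image (· ++ [false]) ∪ (E σ k).image (· ++ [true])

lemma mem_E {σ τ : List Bool} {k : ℕ} :
    τ ∈ E σ k ↔ σ <+: τ ∧ τ.length = σ.length + k := by
  induction k generalizing τ with
  | zero =>
      simp only [E, Finset.mem_singleton]
      constructor
      · rintro rfl; simp
      · rintro ⟨h1, h2⟩
        exact (h1.eq_of_length (by omega)).symm
  | succ k ih =>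
      simp only [E, Finset.mem_union, Finset.mem_image]
      constructor
      · rintro (⟨ρ, hρ, rfl⟩ | ⟨ρ, hρ, rfl⟩) <;>
          · obtain ⟨h1, h2⟩ := ih.1 hρ
            exact ⟨h1.trans (ρ.prefix_append _), by simp [h2]; omega⟩
      · rintro ⟨h1, h2⟩
        have hne : τ ≠ [] := by
          intro h; rw [h] at h2; simp at h2
        have : τ.dropLast ++ [τ.getLast hne] = τ := List.dropLast_append_getLast hne
        have hmem : τ.dropLast ∈ E σ k := by
          apply ih.2
          constructor
          · rw [List.dropLast_eq_take, List.prefix_take_iff]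
            exact ⟨h1, by simp [h2]⟩
          · simp [List.length_dropLast, h2]
        cases hl : τ.getLast hne
        · left; exact ⟨τ.dropLast, hmem, by rw [← hl, this]⟩
        · right; exact ⟨τ.dropLast, hmem, by rw [← hl, this]⟩

lemma mm_E (s : ℝ) (A : Set (ℕ → Bool)) (σ : List Bool) (k : ℕ) :
    mm s A σ = ∑ τ ∈ E σ k, mm s A τ := by
  induction k with
  | zero => simp [E]
  | succ k ih =>
      rw [ih]
      have hinj : ∀ i : Bool, Function.Injective (fun ρ : List Bool => ρ ++ [i]) := by
        intro i ρ ρ' h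
        simpa using List.append_inj_left' h rfl
      have hdisj : Disjoint ((E σ k).image (· ++ [false])) ((E σ k).image (· ++ [true])) := by
        rw [Finset.disjoint_left]
        rintro τ h0 h1
        simp only [Finset.mem_image] at h0 h1
        obtain ⟨ρ, _, rfl⟩ := h0
        obtain ⟨ρ', _, h⟩ := h1
        exact append_singleton_ne (by simp) h.symm
      rw [E, Finset.sum_union hdisj, Finset.sum_image (fun a _ b _ h => hinj false h),
        Finset.sum_image (fun a _ b _ h => hinj true h), ← Finset.sum_add_distrib]
      exact Finset.sum_congr rfl fun τ _ => mm_add s A τ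

/-- the combinatorial cover lemma -/
lemma cover_lemma : ∀ (k : ℕ) (σ : List Bool) (F : Finset (List Bool)),
    (∀ τ ∈ F, σ <+: τ ∧ τ.length ≤ σ.length + k) →
    cyl σ ⊆ (⋃ τ ∈ F, cyl τ) → mm s A σ ≤ ∑ τ ∈ F, mm s A τ := by
  intro k
  induction k with
  | zero =>
      intro σ F hF hcov
      have hσF : σ ∈ F := by
        obtain ⟨x, hx⟩ := cyl_nonempty σ
        have := hcov hx
        simp only [Set.mem_iUnion] at this
        obtain ⟨τ, hτ, _⟩ := this
        obtain ⟨h1, h2⟩ := hF τ hτ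
        have : σ = τ := h1.eq_of_length (le_antisymm h1.length_le (by omega))
        rw [this]; exact hτ
      exact Finset.single_le_sum (fun τ _ => zero_le) hσF
  | succ k ih =>
      intro σ F hF hcov
      by_cases hσF : σ ∈ F
      · exact Finset.single_le_sum (fun τ _ => zero_le) hσF
      have hproper : ∀ τ ∈ F, σ.length < τ.length := by
        intro τ hτ
        obtain ⟨h1, _⟩ := hF τ hτ
        rcases lt_or_eq_of_le h1.length_le with h | h
        · exact h
        · exact absurd (h1.eq_of_length h ▸ hτ) hσF
      have hchild : ∀ τ ∈ F, (σ ++ [false] <+: τ) ∨ (σ ++ [true] <+: τ) := by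
        intro τ hτ
        have := step_prefix (hF τ hτ).1 (hproper τ hτ)
        cases h : τ[σ.length]'(hproper τ hτ)
        · left; rwa [h] at this
        · right; rwa [h] at this
      have hdisj01 : ∀ τ : List Bool, ¬ ((σ ++ [false] <+: τ) ∧ (σ ++ [true] <+: τ)) := by
        rintro τ ⟨h0, h1⟩
        have hn : σ.length < (σ ++ [false]).length := by simp
        have hn' : σ.length < (σ ++ [true]).length := by simp
        have e0 := h0.getElem hn
        have e1 := h1.getElem hn'
        have q0 : (σ ++ [false])[σ.length]'hn = false := by simp
        have q1 : (σ ++ [true])[σ.length]'hn' = true := by simp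
        rw [q0] at e0
        rw [q1] at e1
        rw [← e1] at e0
        exact Bool.false_ne_true e0
      have hcov' : ∀ (i : Bool), cyl (σ ++ [i]) ⊆
          ⋃ τ ∈ F.filter (fun τ => σ ++ [i] <+: τ), cyl τ := by
        intro i x hx
        have hxσ : x ∈ cyl σ := cyl_mono (σ.prefix_append [i]) hx
        have := hcov hxσ
        simp only [Set.mem_iUnion] at this ⊢
        obtain ⟨τ, hτ, hxτ⟩ := this
        refine ⟨τ, Finset.mem_filter.2 ⟨hτ, ?_⟩, hxτ⟩
        rcases hchild τ hτ with h | h <;> cases i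
        · exact h
        · exfalso
          exact Set.eq_empty_iff_forall_notMem.1 (disjoint_children σ)
            x ⟨cyl_mono h hxτ, hx⟩
        · exfalso
          exact Set.eq_empty_iff_forall_notMem.1 (disjoint_children σ)
            x ⟨hx, cyl_mono h hxτ⟩
        · exact h
      have hlen : ∀ (i : Bool), ∀ τ ∈ F.filter (fun τ => σ ++ [i] <+: τ),
          (σ ++ [i]) <+: τ ∧ τ.length ≤ (σ ++ [i]).length + k := by
        intro i τ hτ
        rw [Finset.mem_filter] at hτ
        refine ⟨hτ.2, ?_⟩
        have := (hF τ hτ.1).2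
        simp only [List.length_append, List.length_cons, List.length_nil]
        omega
      have h0 := ih (σ ++ [false]) _ (hlen false) (hcov' false)
      have h1 := ih (σ ++ [true]) _ (hlen true) (hcov' true)
      have hdisjF : Disjoint (F.filter (fun τ => σ ++ [false] <+: τ))
          (F.filter (fun τ => σ ++ [true] <+: τ)) := by
        rw [Finset.disjoint_left]
        intro τ ha hb
        rw [Finset.mem_filter] at ha hb
        exact hdisj01 τ ⟨ha.2, hb.2⟩
      calc mm s A σ = mm s A (σ ++ [false]) + mm s A (σ ++ [true]) := mm_add s A σ
        _ ≤ (∑ τ ∈ F.filter (fun τ => σ ++ [false] <+: τ), mm s A τ)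
            + ∑ τ ∈ F.filter (fun τ => σ ++ [true] <+: τ), mm s A τ := add_le_add h0 h1
        _ = ∑ τ ∈ (F.filter (fun τ => σ ++ [false] <+: τ)
            ∪ F.filter (fun τ => σ ++ [true] <+: τ)), mm s A τ :=
            (Finset.sum_union hdisjF).symm
        _ ≤ ∑ τ ∈ F, mm s A τ := Finset.sum_le_sum_of_subset
            (Finset.union_subset (Finset.filter_subset _ _) (Finset.filter_subset _ _))

lemma prefix_digits {x : ℕ → Bool} {τ : List Bool} (hx : x ∈ cyl τ) {n : ℕ}
    (hn : τ.length ≤ n) : τ <+: digits x n := by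
  rw [List.prefix_iff_eq_take]
  apply List.ext_getElem (by simp [hn]) (fun i h1 h2 => ?_)
  have hi : i < τ.length := h1
  rw [List.getElem_take]
  simp only [digits, List.getElem_ofFn]
  exact (mem_cyl.1 hx i hi).symm

/-- cylinders are open -/
lemma isOpen_cyl (σ : List Bool) : IsOpen (cyl σ) := by
  obtain ⟨x, hx⟩ := cyl_nonempty σ
  have : cyl σ = PiNat.cylinder x σ.length := by
    ext y
    rw [PiNat.mem_cylinder_iff, mem_cyl]
    constructor
    · intro h i hi
      rw [h i hi, ← mem_cyl.1 hx i hi]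
    · intro h i hi
      rw [h i hi, mem_cyl.1 hx i hi]
  rw [this]
  exact PiNat.isOpen_cylinder _ _ _

lemma isClosed_cyl (σ : List Bool) : IsClosed (cyl σ) := by
  have : cyl σ = ⋂ i : Fin σ.length, (fun x : ℕ → Bool => x i) ⁻¹' {σ.get i} := by
    ext y; simp [cyl, Set.mem_iInter]
  rw [this]
  exact isClosed_iInter fun i => IsClosed.preimage (continuous_apply (i : ℕ)) isClosed_singleton

lemma isCompact_cyl (σ : List Bool) : IsCompact (cyl σ) := (isClosed_cyl σ).isCompact

/-- helper: sum over image -/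
lemma sum_image_le' {α β : Type*} [DecidableEq β] (s : Finset α) (f : α → β) (g : β → ℝ≥0∞) :
    ∑ ρ ∈ s.image f, g ρ ≤ ∑ n ∈ s, g (f n) := by
  classical
  induction s using Finset.induction with
  | empty => simp
  | insert a t h ih =>
      rw [Finset.image_insert, Finset.sum_insert h]
      by_cases hfa : f a ∈ t.image f
      · rw [Finset.insert_eq_self.2 hfa]
        exact ih.trans le_add_self
      · rw [Finset.sum_insert hfa]
        exact add_le_add le_rfl ih

open scoped Classical in
/-- the pre-measure function on sets -/
noncomputable def preμ (s : ℝ) (A : Set (ℕ → Bool)) (S : Set (ℕ → Bool)) : ℝ≥0∞ :=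
  if S = ∅ then 0 else ⨅ (σ : List Bool) (_ : S = cyl σ), mm s A σ

lemma preμ_cyl (s : ℝ) (A : Set (ℕ → Bool)) (σ : List Bool) :
    preμ s A (cyl σ) = mm s A σ := by
  rw [preμ]
  rw [if_neg (Set.nonempty_iff_ne_empty.1 (cyl_nonempty σ))]
  apply le_antisymm
  · exact iInf₂_le (f := fun (τ : List Bool) (_ : cyl σ = cyl τ) => mm s A τ) σ rfl
  · refine le_iInf₂ fun τ h => ?_
    rw [cyl_injective h]

lemma exists_cyl_of_preμ_ne_top {S : Set (ℕ → Bool)} (hne : S ≠ ∅)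
    (h : preμ s A S ≠ ⊤) : ∃ τ, S = cyl τ := by
  by_contra hc
  push_neg at hc
  apply h
  rw [preμ, if_neg hne]
  simp only [iInf_eq_top]
  intro τ hτ
  exact absurd hτ (hc τ)

/-- the outer measure -/
noncomputable def μ0 (s : ℝ) (A : Set (ℕ → Bool)) : OuterMeasure (ℕ → Bool) :=
  OuterMeasure.ofFunction (preμ s A) (by rw [preμ]; simp)

lemma μ0_cyl (hs0 : 0 ≤ s) (σ : List Bool) : μ0 s A (cyl σ) = mm s A σ := by
  apply le_antisymm
  · exact (OuterMeasure.ofFunction_le _).trans_eq (preμ_cyl s A σ)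
  · rw [μ0, OuterMeasure.ofFunction_apply]
    refine le_iInf₂ fun t hcov => ?_
    classical
    by_cases htop : ∃ n, preμ s A (t n) = ⊤
    · obtain ⟨n, hn⟩ := htop
      have := ENNReal.le_tsum (f := fun n => preμ s A (t n)) n
      rw [hn] at this
      exact le_top.trans this
    push_neg at htop
    -- choose cylinders
    have hch : ∀ n, ∃ τ : List Bool, (t n).Nonempty → t n = cyl τ := by
      intro n
      by_cases hemp : (t n).Nonempty
      · obtain ⟨τ, hτ⟩ := exists_cyl_of_preμ_ne_top
          (Set.nonempty_iff_ne_empty.1 hemp) (htop n)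
        exact ⟨τ, fun _ => hτ⟩
      · exact ⟨[], fun h => absurd h hemp⟩
    choose τ hτ using hch
    set U : ℕ → Set (ℕ → Bool) := fun n => if (t n).Nonempty then cyl (τ n) else ∅ with hU
    have hUopen : ∀ n, IsOpen (U n) := by
      intro n
      by_cases hne : (t n).Nonempty
      · simp only [hU, if_pos hne]; exact isOpen_cyl _
      · simp only [hU, if_neg hne]; exact isOpen_empty
    have hsub : cyl σ ⊆ ⋃ n, U n := by
      intro x hx
      obtain ⟨_, ⟨n, rfl⟩, hxn⟩ := hcov hx
      refine Set.mem_iUnion.2 ⟨n, ?_⟩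
      have hne : (t n).Nonempty := ⟨x, hxn⟩
      simp only [hU, if_pos hne]
      rw [← hτ n hne]
      exact hxn
    obtain ⟨G, hG⟩ := (isCompact_cyl σ).elim_finite_subcover U hUopen hsub
    have hUmem : ∀ {x n}, x ∈ U n → (t n).Nonempty ∧ x ∈ cyl (τ n) := by
      intro x n hx
      by_cases hne : (t n).Nonempty
      · simp only [hU, if_pos hne] at hx; exact ⟨hne, hx⟩
      · simp only [hU, if_neg hne] at hx; exact absurd hx (Set.notMem_empty x)
    by_cases hpre : ∃ n, (t n).Nonempty ∧ τ n <+: σ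
    · obtain ⟨n, hne, hp⟩ := hpre
      calc mm s A σ ≤ mm s A (τ n) := mm_mono hp s A
        _ = preμ s A (t n) := by rw [hτ n hne, preμ_cyl]
        _ ≤ ∑' n, preμ s A (t n) := ENNReal.le_tsum n
    · push_neg at hpre
      set Gf := G.filter (fun n => (t n).Nonempty ∧ σ <+: τ n) with hGf
      set F := Gf.image τ with hF
      have hcov2 : cyl σ ⊆ ⋃ ρ ∈ F, cyl ρ := by
        intro x hx
        obtain ⟨n, hnG, hxU⟩ : ∃ n ∈ G, x ∈ U n := by
          have := hG hx
          simpa using this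
        obtain ⟨hne, hxτ⟩ := hUmem hxU
        have hcomp : σ <+: τ n ∨ τ n <+: σ := compat ⟨x, hx, hxτ⟩
        have hστ : σ <+: τ n := hcomp.resolve_right (hpre n hne)
        refine Set.mem_iUnion₂.2 ⟨τ n, ?_, hxτ⟩
        rw [hF]
        exact Finset.mem_image_of_mem τ (Finset.mem_filter.2 ⟨hnG, hne, hστ⟩)
      have hpref : ∀ ρ ∈ F, σ <+: ρ ∧ ρ.length ≤ σ.length + F.sup List.length := by
        intro ρ hρ
        rw [hF, Finset.mem_image] at hρ
        obtain ⟨n, hn, rfl⟩ := hρ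
        rw [Finset.mem_filter] at hn
        refine ⟨hn.2.2, ?_⟩
        have : (τ n).length ≤ F.sup List.length :=
          Finset.le_sup (f := List.length)
            (by rw [hF]; exact Finset.mem_image_of_mem τ (Finset.mem_filter.2 hn))
        omega
      calc mm s A σ ≤ ∑ ρ ∈ F, mm s A ρ := cover_lemma _ σ F hpref hcov2
        _ ≤ ∑ n ∈ Gf, mm s A (τ n) := by rw [hF]; exact sum_image_le' _ _ _
        _ = ∑ n ∈ Gf, preμ s A (t n) := by
            apply Finset.sum_congr rfl
            intro n hn
            rw [Finset.mem_filter] at hn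
            rw [hτ n hn.2.1, preμ_cyl]
        _ ≤ ∑' n, preμ s A (t n) := ENNReal.sum_le_tsum Gf

lemma univ_eq_cyl_nil : (Set.univ : Set (ℕ → Bool)) = cyl [] := by
  ext x; constructor
  · intro _ i; exact i.elim0
  · intro _; trivial

lemma μ0_apply (s : ℝ) (A : Set (ℕ → Bool)) (S : Set (ℕ → Bool)) :
    μ0 s A S = ⨅ (t : ℕ → Set (ℕ → Bool)) (_ : S ⊆ ⋃ n, t n), ∑' n, preμ s A (t n) :=
  OuterMeasure.ofFunction_apply _ _ _

/-- key splitting estimate -/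
lemma split_le (hs0 : 0 ≤ s) (τ σ : List Bool) :
    μ0 s A (cyl τ ∩ cyl σ) + μ0 s A (cyl τ \ cyl σ) ≤ mm s A τ := by
  by_cases h1 : σ <+: τ
  · have hsub : cyl τ ⊆ cyl σ := cyl_mono h1
    rw [Set.inter_eq_self_of_subset_left hsub, Set.diff_eq_empty.2 hsub]
    simp [μ0_cyl hs0]
  by_cases h2 : τ <+: σ
  · -- τ proper prefix of σ
    have hlt : τ.length < σ.length := by
      rcases lt_or_eq_of_le h2.length_le with h | h
      · exact h
      · exact absurd (h2.eq_of_length h ▸ List.prefix_refl σ) h1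
    set k := σ.length - τ.length with hk
    have hσE : σ ∈ E τ k := mem_E.2 ⟨h2, by omega⟩
    have hinter : cyl τ ∩ cyl σ = cyl σ :=
      Set.inter_eq_self_of_subset_right (cyl_mono h2)
    have hdiff : cyl τ \ cyl σ ⊆ ⋃ ρ ∈ (E τ k).erase σ, cyl ρ := by
      rintro x ⟨hxτ, hxσ⟩
      have hρE : digits x σ.length ∈ E τ k :=
        mem_E.2 ⟨prefix_digits hxτ (by omega), by simp; omega⟩
      have hne : digits x σ.length ≠ σ := by
        intro h
        exact hxσ (h ▸ mem_cyl_digits x σ.length)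
      exact Set.mem_biUnion (Finset.mem_erase.2 ⟨hne, hρE⟩) (mem_cyl_digits x σ.length)
    calc μ0 s A (cyl τ ∩ cyl σ) + μ0 s A (cyl τ \ cyl σ)
        ≤ mm s A σ + ∑ ρ ∈ (E τ k).erase σ, mm s A ρ := by
          apply add_le_add
          · rw [hinter, μ0_cyl hs0]
          · refine le_trans (measure_mono hdiff) ?_
            refine le_trans (measure_biUnion_finset_le _ _) ?_
            exact Finset.sum_le_sum fun ρ _ => (μ0_cyl hs0 ρ).le
      _ = ∑ ρ ∈ E τ k, mm s A ρ := Finset.add_sum_erase _ _ hσE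
      _ = mm s A τ := (mm_E s A τ k).symm
  · -- incomparable
    have hd : cyl σ ∩ cyl τ = ∅ := disjoint_of_incomp h1 h2
    have hinter : cyl τ ∩ cyl σ = ∅ := by rwa [Set.inter_comm] at hd
    have hdiff : cyl τ \ cyl σ = cyl τ := by
      apply sdiff_eq_self_iff_disjoint.2
      rw [Set.disjoint_iff_inter_eq_empty, Set.inter_comm]
      exact hinter
    rw [hinter, hdiff]
    simp [μ0_cyl hs0]

lemma carath_cyl (hs0 : 0 ≤ s) (σ : List Bool) :
    MeasurableSet[(μ0 s A).caratheodory] (cyl σ) := by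
  rw [OuterMeasure.isCaratheodory_iff_le]
  intro X
  rw [μ0_apply s A X]
  refine le_iInf₂ fun t hcov => ?_
  classical
  by_cases htop : ∃ n, preμ s A (t n) = ⊤
  · obtain ⟨n, hn⟩ := htop
    have := ENNReal.le_tsum (f := fun n => preμ s A (t n)) n
    rw [hn] at this
    exact le_top.trans this
  push_neg at htop
  have key : ∀ n, μ0 s A (t n ∩ cyl σ) + μ0 s A (t n \ cyl σ) ≤ preμ s A (t n) := by
    intro n
    by_cases hemp : t n = ∅
    · rw [hemp]
      simp
    · obtain ⟨τ, hτ⟩ := exists_cyl_of_preμ_ne_top hemp (htop n)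
      rw [hτ, preμ_cyl]
      exact split_le hs0 τ σ
  calc μ0 s A (X ∩ cyl σ) + μ0 s A (X \ cyl σ)
      ≤ (∑' n, μ0 s A (t n ∩ cyl σ)) + ∑' n, μ0 s A (t n \ cyl σ) := by
        apply add_le_add
        · refine le_trans (measure_mono ?_) (measure_iUnion_le _)
          intro x hx
          obtain ⟨_, ⟨n, rfl⟩, hxn⟩ := hcov hx.1
          exact Set.mem_iUnion.2 ⟨n, hxn, hx.2⟩
        · refine le_trans (measure_mono ?_) (measure_iUnion_le _)
          intro x hx
          obtain ⟨_, ⟨n, rfl⟩, hxn⟩ := hcov hx.1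
          exact Set.mem_iUnion.2 ⟨n, hxn, hx.2⟩
    _ = ∑' n, (μ0 s A (t n ∩ cyl σ) + μ0 s A (t n \ cyl σ)) := (ENNReal.tsum_add).symm
    _ ≤ ∑' n, preμ s A (t n) := ENNReal.tsum_le_tsum key

lemma cylinder_eq_cyl (x : ℕ → Bool) (n : ℕ) : PiNat.cylinder x n = cyl (digits x n) := by
  ext y
  rw [PiNat.mem_cylinder_iff, mem_cyl]
  constructor
  · intro h i hi
    simp only [digits_length] at hi
    simp [digits, h i hi]
  · intro h i hi
    have := h i (by simpa using hi)
    simpa [digits] using this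

lemma borel_le_carath (hs0 : 0 ≤ s) :
    (inferInstance : MeasurableSpace (ℕ → Bool)) ≤ (μ0 s A).caratheodory := by
  have hb : (inferInstance : MeasurableSpace (ℕ → Bool)) = borel (ℕ → Bool) :=
    BorelSpace.measurable_eq
  rw [hb, (PiNat.isTopologicalBasis_cylinders (fun _ : ℕ => Bool)).borel_eq_generateFrom]
  apply MeasurableSpace.generateFrom_le
  rintro _ ⟨x, n, rfl⟩
  rw [cylinder_eq_cyl]
  exact carath_cyl hs0 _


lemma ofReal_half_pow (n : ℕ) : ENNReal.ofReal ((1/2:ℝ)^n) = (2:ℝ≥0∞) ^ (-(n:ℝ)) := by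
  rw [ENNReal.ofReal_pow (by norm_num)]
  have h2 : ENNReal.ofReal (1/2:ℝ) = (2:ℝ≥0∞)⁻¹ := by
    rw [one_div, ENNReal.ofReal_inv_of_pos (by norm_num)]
    norm_num
  rw [h2, ENNReal.rpow_neg, ENNReal.rpow_natCast, ENNReal.inv_pow]

lemma diam_cyl (τ : List Bool) : EMetric.diam (cyl τ) ≤ (2:ℝ≥0∞) ^ (-(τ.length:ℝ)) := by
  apply EMetric.diam_le
  intro x hx y hy
  have hyx : y ∈ PiNat.cylinder x τ.length := by
    rw [PiNat.mem_cylinder_iff]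
    intro i hi
    rw [mem_cyl.1 hy i hi, mem_cyl.1 hx i hi]
  have hd : dist y x ≤ (1/2:ℝ)^τ.length := PiNat.mem_cylinder_iff_dist_le.1 hyx
  rw [edist_dist, dist_comm]
  exact le_trans (ENNReal.ofReal_le_ofReal hd) (ofReal_half_pow τ.length).le

lemma cap_eq_rpow (s : ℝ) (τ : List Bool) :
    cap s τ = ((2:ℝ≥0∞) ^ (-(τ.length:ℝ))) ^ s := by
  rw [cap, ← ENNReal.rpow_mul]
  ring_nf

lemma diam_pow_le_cap (hs : 0 ≤ s) (τ : List Bool) :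
    EMetric.diam (cyl τ) ^ s ≤ cap s τ := by
  rw [cap_eq_rpow]
  exact ENNReal.rpow_le_rpow (diam_cyl τ) hs

/-- positivity of the min-cut value at the root -/
lemma b_root_pos (hs : 0 ≤ s) (hpos : 0 < μH[s] A) : 0 < b s A [] := by
  rcases eq_or_lt_of_le (zero_le : 0 ≤ b s A []) with h0 | h
  · exfalso
    rcases eq_or_lt_of_le hs with hs0 | hs0
    · -- s = 0
      have hlt : b s A [] < 1 := by rw [← h0]; norm_num
      rw [b, iInf_lt_iff] at hlt
      obtain ⟨F, hF⟩ := hlt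
      rw [iInf_lt_iff] at hF
      obtain ⟨hcut, hsum⟩ := hF
      have hcap : ∀ τ ∈ F, cap s τ = 1 := by
        intro τ _
        rw [cap, ← hs0]
        norm_num
      rw [Finset.sum_congr rfl hcap, Finset.sum_const, nsmul_eq_mul, mul_one] at hsum
      have hF0 : F = ∅ := by
        by_contra hne
        obtain ⟨τ, hτ⟩ := Finset.nonempty_of_ne_empty hne
        have : (1:ℝ≥0∞) ≤ F.card := by
          exact_mod_cast Nat.one_le_iff_ne_zero.2 (Finset.card_ne_zero_of_mem hτ)
        exact absurd (lt_of_le_of_lt this hsum) (lt_irrefl _)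
      have hAe : A = ∅ := by
        have := hcut.2
        rw [hF0] at this
        have h2 : A ∩ cyl [] = ∅ := by simpa using this
        rwa [← univ_eq_cyl_nil, Set.inter_univ] at h2
      rw [hAe] at hpos
      simp at hpos
    · -- s > 0
      have hchoice : ∀ j : ℕ, ∃ F : Finset (List Bool),
          IsCut A [] F ∧ ∑ τ ∈ F, cap s τ < 2⁻¹ ^ j := by
        intro j
        have hlt : b s A [] < 2⁻¹ ^ j := by
          rw [← h0]
          exact ENNReal.pow_pos (by norm_num) j
        rw [b, iInf_lt_iff] at hlt
        obtain ⟨F, hF⟩ := hlt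
        rw [iInf_lt_iff] at hF
        obtain ⟨hcut, hsum⟩ := hF
        exact ⟨F, hcut, hsum⟩
      choose F hcut hsum using hchoice
      set y : ℝ≥0∞ := 2⁻¹ ^ (1/s) with hy
      have hylt : y < 1 := by
        rw [hy]
        apply ENNReal.rpow_lt_one (by norm_num)
        positivity
      have hr : Filter.Tendsto (fun j : ℕ => y ^ j) Filter.atTop (nhds 0) :=
        ENNReal.tendsto_pow_atTop_nhds_zero_of_lt_one hylt
      have hcap_le : ∀ j, ∀ τ ∈ F j, cap s τ ≤ 2⁻¹ ^ j := by
        intro j τ hτ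
        exact le_trans (Finset.single_le_sum (fun τ _ => zero_le) hτ) (hsum j).le
      have hdiam : ∀ j, ∀ i : (F j : Finset (List Bool)), EMetric.diam (cyl (i:List Bool)) ≤ y ^ j := by
        intro j ⟨τ, hτ⟩
        have h1 : (2:ℝ≥0∞) ^ (-(τ.length:ℝ)) = (cap s τ) ^ (1/s) := by
          rw [cap, ← ENNReal.rpow_mul]
          congr 1
          field_simp
        have h2 : (cap s τ) ^ (1/s) ≤ ((2⁻¹:ℝ≥0∞) ^ j) ^ (1/s) :=
          ENNReal.rpow_le_rpow (hcap_le j τ hτ) (by positivity)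
        have h3 : ((2⁻¹:ℝ≥0∞) ^ j) ^ (1/s) = y ^ j := by
          rw [hy, ← ENNReal.rpow_natCast 2⁻¹ j, ← ENNReal.rpow_mul,
            ← ENNReal.rpow_natCast (2⁻¹ ^ (1/s)) j, ← ENNReal.rpow_mul]
          congr 1
          ring
        calc EMetric.diam (cyl (τ:List Bool)) ≤ 2 ^ (-(τ.length:ℝ)) := diam_cyl τ
          _ = (cap s τ) ^ (1/s) := h1
          _ ≤ ((2⁻¹:ℝ≥0∞) ^ j) ^ (1/s) := h2
          _ = y ^ j := h3
      have hcover : ∀ j, A ⊆ ⋃ i : (F j : Finset (List Bool)), cyl (i : List Bool) := by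
        intro j x hx
        have := (hcut j).2 ⟨hx, by rw [← univ_eq_cyl_nil]; trivial⟩
        simp only [Set.mem_iUnion] at this ⊢
        obtain ⟨τ, hτ, hxτ⟩ := this
        exact ⟨⟨τ, hτ⟩, hxτ⟩
      have hmain := Measure.hausdorffMeasure_le_liminf_tsum (ι := fun j => (F j : Finset (List Bool)))
        s A (l := Filter.atTop) (fun j => y ^ j) hr (fun j i => cyl (i : List Bool))
        (Filter.Eventually.of_forall hdiam) (Filter.Eventually.of_forall hcover)
      have hbound : ∀ j, (∑' i : (F j : Finset (List Bool)), EMetric.diam (cyl (i:List Bool)) ^ s)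
          ≤ 2⁻¹ ^ j := by
        intro j
        rw [Finset.tsum_subtype (F j) (fun τ => EMetric.diam (cyl τ) ^ s)]
        calc ∑ τ ∈ F j, EMetric.diam (cyl τ) ^ s ≤ ∑ τ ∈ F j, cap s τ :=
            Finset.sum_le_sum fun τ _ => diam_pow_le_cap hs τ
          _ ≤ 2⁻¹ ^ j := (hsum j).le
      have hlim : Filter.liminf (fun j : ℕ =>
          ∑' i : (F j : Finset (List Bool)), EMetric.diam (cyl (i:List Bool)) ^ s) Filter.atTop = 0 := by
        apply le_antisymm _ zero_le
        calc Filter.liminf _ Filter.atTop ≤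
            Filter.liminf (fun j : ℕ => (2⁻¹:ℝ≥0∞) ^ j) Filter.atTop :=
              Filter.liminf_le_liminf (Filter.Eventually.of_forall hbound)
          _ = 0 := (ENNReal.tendsto_pow_atTop_nhds_zero_of_lt_one (by norm_num)).liminf_eq
      rw [show Filter.liminf (fun n => ∑' (i : ↥(F n)), Metric.ediam (cyl (i : List Bool)) ^ s) Filter.atTop = 0 from hlim] at hmain
      exact absurd (lt_of_lt_of_le hpos hmain) (lt_irrefl _)
  · exact h

end Frost

open Frost in
theorem stmt1 (s : ℝ) (hs : 0 ≤ s) (A : Set (ℕ → Bool)) (hA : IsCompact A)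
    (hpos : 0 < μH[s] A) :
    ∃ (μ : Measure (ℕ → Bool)) (γ : ℝ), IsProbabilityMeasure μ ∧ μ Aᶜ = 0 ∧ 0 < γ ∧
      ∀ σ : List Bool, μ (cyl σ) ≤ ENNReal.ofReal γ * (2 : ℝ≥0∞) ^ (-s * (σ.length : ℝ)) := by
  have hb : 0 < b s A [] := b_root_pos hs hpos
  have hbne : b s A [] ≠ ⊤ := by
    have := mm_le_cap hs A []
    rw [mm_nil] at this
    exact ne_top_of_le_ne_top (by simp [cap]) this
  set c : ℝ≥0∞ := b s A [] with hc
  set μ1 : Measure (ℕ → Bool) := (μ0 s A).toMeasure (borel_le_carath hs) with hμ1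
  have hμ1_cyl : ∀ σ : List Bool, μ1 (cyl σ) = mm s A σ := by
    intro σ
    rw [hμ1, MeasureTheory.toMeasure_apply _ _ (isOpen_cyl σ).measurableSet]
    exact μ0_cyl hs σ
  have hμ1_univ : μ1 Set.univ = c := by
    rw [univ_eq_cyl_nil, hμ1_cyl, mm_nil]
  set μ : Measure (ℕ → Bool) := c⁻¹ • μ1 with hμ
  refine ⟨μ, (c.toReal)⁻¹, ?_, ?_, ?_, ?_⟩
  · constructor
    rw [hμ, Measure.smul_apply, hμ1_univ, smul_eq_mul, ENNReal.inv_mul_cancel hb.ne' hbne]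
  · -- μ Aᶜ = 0
    have hcl : IsClosed A := hA.isClosed
    have hcov : Aᶜ ⊆ ⋃ σ : {σ : List Bool // A ∩ cyl σ = ∅}, cyl (σ : List Bool) := by
      intro x hx
      obtain ⟨v, ⟨y, n, rfl⟩, hxv, hvsub⟩ :=
        (PiNat.isTopologicalBasis_cylinders (fun _ : ℕ => Bool)).exists_subset_of_mem_open
          hx hcl.isOpen_compl
      rw [cylinder_eq_cyl] at hxv hvsub
      have hdisj : A ∩ cyl (digits y n) = ∅ := by
        rw [Set.eq_empty_iff_forall_notMem]
        rintro z ⟨hzA, hz⟩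
        exact hvsub hz hzA
      exact Set.mem_iUnion.2 ⟨⟨digits y n, hdisj⟩, hxv⟩
    have hnull : ∀ σ : {σ : List Bool // A ∩ cyl σ = ∅}, μ (cyl (σ : List Bool)) = 0 := by
      rintro ⟨σ, hσ⟩
      rw [hμ, Measure.smul_apply, hμ1_cyl, smul_eq_mul]
      have : mm s A σ = 0 := le_antisymm ((mm_le_b hs A σ).trans (b_zero_of_disj hσ).le) zero_le
      rw [this, mul_zero]
    have := measure_iUnion_null hnull
    exact measure_mono_null hcov this
  · -- 0 < γ
    have : 0 < c.toReal := ENNReal.toReal_pos hb.ne' hbne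
    positivity
  · intro σ
    have hofReal : ENNReal.ofReal (c.toReal)⁻¹ = c⁻¹ := by
      rw [ENNReal.ofReal_inv_of_pos (ENNReal.toReal_pos hb.ne' hbne),
        ENNReal.ofReal_toReal hbne]
    rw [hofReal, hμ, Measure.smul_apply, hμ1_cyl, smul_eq_mul]
    exact mul_le_mul_right (mm_le_cap hs A σ) c⁻¹
end

section
/- Let 0 ≤ s < t be real numbers, let ε > 0, and let W be a set of finite binary strings such that for every prefix-free subset V ⊆ W one has Σ_{σ ∈ V} 2^{-s·|σ|} ≤ ε. Then Σ_{σ ∈ W} 2^{-t·|σ|} ≤ ε/(1 - 2^{-(t-s)}). -/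
open MeasureTheory ENNReal

/-- A set of finite binary strings is prefix-free (an antichain for the prefix order)
if none of its elements is a proper initial segment of another. -/
def IsPrefixFree (V : Set (List Bool)) : Prop :=
  ∀ σ ∈ V, ∀ τ ∈ V, σ <+: τ → σ = τ

theorem stmt6 (s t ε : ℝ) (hs : 0 ≤ s) (hst : s < t) (hε : 0 < ε)
    (W : Set (List Bool))
    (hW : ∀ V ⊆ W, IsPrefixFree V →
      ∑' σ : V, (2 : ℝ≥0∞) ^ (-s * ((σ : List Bool).length : ℝ)) ≤ ENNReal.ofReal ε) :
    ∑' σ : W, (2 : ℝ≥0∞) ^ (-t * ((σ : List Bool).length : ℝ)) ≤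
      ENNReal.ofReal (ε / (1 - 2 ^ (-(t - s)))) := by
  set r : ℝ≥0∞ := (2 : ℝ≥0∞) ^ (-(t - s)) with hrdef
  have hr1 : r < 1 := by
    rw [hrdef]
    exact ENNReal.rpow_lt_one_of_one_lt_of_neg (by norm_num) (by linarith)
  have h2ne : (2 : ℝ≥0∞) ≠ 0 := by norm_num
  have h2net : (2 : ℝ≥0∞) ≠ ⊤ := by norm_num
  -- key per-length bound
  have key : ∀ n : ℕ,
      ∑' σ : {σ : W // (σ : List Bool).length = n},
        (2 : ℝ≥0∞) ^ (-t * (((σ : W) : List Bool).length : ℝ)) ≤ r ^ n * ENNReal.ofReal ε := by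
    intro n
    set V : Set (List Bool) := {σ | σ ∈ W ∧ σ.length = n} with hVdef
    have hV : V ⊆ W := fun σ h => h.1
    have hpf : IsPrefixFree V := by
      intro σ hσ τ hτ hpre
      exact List.IsPrefix.eq_of_length hpre (hσ.2.trans hτ.2.symm)
    have hsum := hW V hV hpf
    let e : {σ : W // ((σ : List Bool)).length = n} ≃ V :=
      { toFun := fun x => ⟨x.1.1, x.1.2, x.2⟩
        invFun := fun x => ⟨⟨x.1, x.2.1⟩, x.2.2⟩
        left_inv := fun x => rfl
        right_inv := fun x => rfl }
    have h1 : ∑' σ : {σ : W // (σ : List Bool).length = n},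
        (2 : ℝ≥0∞) ^ (-t * (((σ : W) : List Bool).length : ℝ))
        = ∑' σ : V, (2 : ℝ≥0∞) ^ (-t * ((σ : List Bool).length : ℝ)) := by
      rw [← e.tsum_eq (fun σ : V => (2 : ℝ≥0∞) ^ (-t * ((σ : List Bool).length : ℝ)))]
      exact tsum_congr fun c => rfl
    rw [h1]
    have h2 : ∀ σ : V, (2 : ℝ≥0∞) ^ (-t * ((σ : List Bool).length : ℝ))
        = r ^ n * (2 : ℝ≥0∞) ^ (-s * ((σ : List Bool).length : ℝ)) := by
      intro σ
      have hlen : ((σ : List Bool).length : ℝ) = (n : ℝ) := by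
        exact_mod_cast congrArg Nat.cast σ.2.2
      have hrn : r ^ n = (2 : ℝ≥0∞) ^ (-(t - s) * (n : ℝ)) := by
        rw [hrdef, ← ENNReal.rpow_natCast ((2:ℝ≥0∞) ^ (-(t-s))) n, ← ENNReal.rpow_mul]
      rw [hrn, ← ENNReal.rpow_add _ _ h2ne h2net, hlen]
      ring_nf
    calc ∑' σ : V, (2 : ℝ≥0∞) ^ (-t * ((σ : List Bool).length : ℝ))
        = ∑' σ : V, r ^ n * (2 : ℝ≥0∞) ^ (-s * ((σ : List Bool).length : ℝ)) :=
          tsum_congr h2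
      _ = r ^ n * ∑' σ : V, (2 : ℝ≥0∞) ^ (-s * ((σ : List Bool).length : ℝ)) :=
          ENNReal.tsum_mul_left
      _ ≤ r ^ n * ENNReal.ofReal ε := mul_le_mul_right hsum _
  -- decompose the sum over W by length
  have hdec : ∑' σ : W, (2 : ℝ≥0∞) ^ (-t * ((σ : List Bool).length : ℝ))
      = ∑' n : ℕ, ∑' σ : {σ : W // (σ : List Bool).length = n},
          (2 : ℝ≥0∞) ^ (-t * (((σ : W) : List Bool).length : ℝ)) := by
    rw [← (Equiv.sigmaFiberEquiv (fun σ : W => (σ : List Bool).length)).tsum_eq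
      (fun σ : W => (2 : ℝ≥0∞) ^ (-t * ((σ : List Bool).length : ℝ)))]
    rw [ENNReal.tsum_sigma']
    exact tsum_congr fun n => tsum_congr fun b => rfl
  rw [hdec]
  have hbound : ∑' n : ℕ, ∑' σ : {σ : W // (σ : List Bool).length = n},
      (2 : ℝ≥0∞) ^ (-t * (((σ : W) : List Bool).length : ℝ))
      ≤ ∑' n : ℕ, r ^ n * ENNReal.ofReal ε := ENNReal.tsum_le_tsum key
  refine hbound.trans ?_
  rw [ENNReal.tsum_mul_right, ENNReal.tsum_geometric]
  -- identify the RHS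
  have hx : (0 : ℝ) < (2 : ℝ) ^ (-(t - s)) := Real.rpow_pos_of_pos (by norm_num) _
  have hx1 : (2 : ℝ) ^ (-(t - s)) < 1 :=
    Real.rpow_lt_one_of_one_lt_of_neg (by norm_num) (by linarith)
  have hrofreal : r = ENNReal.ofReal ((2 : ℝ) ^ (-(t - s))) := by
    rw [hrdef, ← ENNReal.ofReal_rpow_of_pos (by norm_num : (0:ℝ) < 2)]
    norm_num
  rw [ENNReal.ofReal_div_of_pos (by linarith), ENNReal.ofReal_sub _ hx.le, hrofreal]
  simp only [ENNReal.ofReal_one]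
  rw [ENNReal.div_eq_inv_mul]
end
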